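/- Let φ(x) = b·x + ∫_{(0,∞)} (1 - e^{-xy}) ν(dy) with φ(1) = 1, and let R be a random variable on the positive integers with P(R = m) = c(φ,m), where c(φ,m) = (1/m!)∫ y^m e^{-y} ν(dy) + b·1_{m=1}. Then for all t ≥ 0, E[e^{-tR}] = 1 - φ(1 - e^{-t}). -/

import Mathlib

open MeasureTheory Set
open scoped ENNReal NNReal
lemma exp_tsum_aux (x : ℝ) : Real.exp x = ∑' n : ℕ, x ^ n / n.factorial := by
  rw [Real.exp_eq_exp_ℝ, NormedSpace.exp_eq_tsum_div]

lemma exp_tsum_shift (x : ℝ) : ∑' n : ℕ, x ^ (n+1) / (n+1).factorial = Real.exp x - 1 := by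
  have hs := Real.summable_pow_div_factorial x
  have h := Summable.tsum_eq_zero_add hs
  rw [exp_tsum_aux x, h]
  simp

lemma aux_one_sub_exp {a y : ℝ} (ha0 : 0 ≤ a) (ha1 : a ≤ 1) (hy : 0 ≤ y) :
    1 - Real.exp (-(a * y)) ≤ min 1 y ∧ 0 ≤ 1 - Real.exp (-(a * y)) := by
  have h1 : Real.exp (-(a*y)) ≤ 1 := by
    rw [← Real.exp_zero]
    exact Real.exp_le_exp.mpr (by nlinarith)
  have h2 := Real.add_one_le_exp (-(a*y))
  exact ⟨le_min (by nlinarith [Real.exp_pos (-(a*y))]) (by nlinarith), by linarith⟩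

lemma aux_pow_exp_le {y : ℝ} (hy : 0 < y) (m : ℕ) (hm : 1 ≤ m) :
    y ^ m * Real.exp (-y) ≤ ((m+1).factorial : ℝ) * min 1 y := by
  have hf : (1:ℝ) ≤ ((m+1).factorial : ℝ) := by exact_mod_cast (Nat.factorial_pos (m+1))
  rcases le_total y 1 with h | h
  · rw [min_eq_right h]
    have h1 : y ^ m ≤ y := by
      calc y ^ m ≤ y ^ 1 := pow_le_pow_of_le_one hy.le h hm
      _ = y := pow_one y
    have h2 : Real.exp (-y) ≤ 1 := by
      rw [← Real.exp_zero]; exact Real.exp_le_exp.mpr (by linarith)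
    nlinarith [pow_nonneg hy.le m, Real.exp_pos (-y)]
  · rw [min_eq_left h]
    have h1 : y ^ (m+1) / ((m+1).factorial : ℝ) ≤ Real.exp y :=
      Real.pow_div_factorial_le_exp y hy.le (m+1)
    have hfp : (0:ℝ) < ((m+1).factorial : ℝ) := by linarith
    have h1' : y ^ (m+1) ≤ ((m+1).factorial : ℝ) * Real.exp y := by
      rw [div_le_iff₀ hfp] at h1; linarith [h1]
    have he : Real.exp (-y) * Real.exp y = 1 := by rw [← Real.exp_add]; simp
    have key : y ^ m * Real.exp (-y) * y ≤ ((m+1).factorial : ℝ) * 1 := by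
      calc y ^ m * Real.exp (-y) * y = y ^ (m+1) * Real.exp (-y) := by ring
      _ ≤ ((m+1).factorial : ℝ) * Real.exp y * Real.exp (-y) := by
          nlinarith [Real.exp_pos (-y)]
      _ = ((m+1).factorial : ℝ) * 1 := by rw [mul_assoc, mul_comm (Real.exp y), he]
    nlinarith [pow_nonneg hy.le m, Real.exp_pos (-y)]

lemma aux_int_min (ν : Measure ℝ) (hν : ∫⁻ y in Ioi (0:ℝ), ENNReal.ofReal (min 1 y) ∂ν ≠ ⊤) :
    Integrable (fun y => min 1 y) (ν.restrict (Ioi 0)) := by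
  constructor
  · exact ((continuous_const.min continuous_id).measurable).aestronglyMeasurable
  · rw [hasFiniteIntegral_iff_ofReal]
    · exact lt_top_iff_ne_top.mpr hν
    · filter_upwards [ae_restrict_mem measurableSet_Ioi] with y hy
      exact le_min zero_le_one (le_of_lt hy)

lemma aux_integrable_of_le {ν : Measure ℝ}
    (hK : Integrable (fun y => min 1 y) (ν.restrict (Ioi 0)))
    {g : ℝ → ℝ} (hg : Measurable g) (C : ℝ)
    (hbound : ∀ y ∈ Ioi (0:ℝ), |g y| ≤ C * min 1 y) :
    Integrable g (ν.restrict (Ioi 0)) := by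
  refine (hK.const_mul C).mono' hg.aestronglyMeasurable ?_
  filter_upwards [ae_restrict_mem measurableSet_Ioi] with y hy
  rw [Real.norm_eq_abs]; exact hbound y hy

set_option maxHeartbeats 1600000 in
theorem laplace_transform_R (b : ℝ) (hb : 0 ≤ b) (ν : Measure ℝ)
    (hν : ∫⁻ y in Ioi (0:ℝ), ENNReal.ofReal (min 1 y) ∂ν ≠ ⊤)
    (φ : ℝ → ℝ)
    (hφ : ∀ x : ℝ, 0 ≤ x → φ x = b * x + ∫ y in Ioi (0:ℝ), (1 - Real.exp (-x * y)) ∂ν)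
    (hφ1 : φ 1 = 1)
    (c : ℕ → ℝ)
    (hc : ∀ m : ℕ, 1 ≤ m → c m =
      (1 / (Nat.factorial m : ℝ)) * ∫ y in Ioi (0:ℝ), y ^ m * Real.exp (-y) ∂ν
        + if m = 1 then b else 0)
    {Ω : Type*} [MeasurableSpace Ω] (μ : Measure Ω) [IsProbabilityMeasure μ]
    (R : Ω → ℕ) (hR : Measurable R) (hRpos : ∀ ω, 1 ≤ R ω)
    (hRlaw : ∀ m : ℕ, 1 ≤ m → μ {ω | R ω = m} = ENNReal.ofReal (c m)) :
    ∀ t : ℝ, 0 ≤ t →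
      ∫ ω, Real.exp (-t * (R ω : ℝ)) ∂μ = 1 - φ (1 - Real.exp (-t)) := by
  intro t ht
  set s : ℝ := Real.exp (-t) with hs_def
  have hs0 : 0 < s := Real.exp_pos _
  have hs1 : s ≤ 1 := by
    rw [hs_def, ← Real.exp_zero]
    exact Real.exp_le_exp.mpr (by linarith)
  have hss : 0 ≤ 1 - s := by linarith
  have hK := aux_int_min ν hν
  -- the series functions
  set f : ℕ → ℝ → ℝ := fun n y => (s*y)^(n+1) / ((n+1).factorial : ℝ) * Real.exp (-y)
    with hf_def
  set G : ℝ → ℝ := fun y => (Real.exp (s*y) - 1) * Real.exp (-y) with hG_def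
  have hf_meas : ∀ n, Measurable (f n) := by
    intro n
    exact (((measurable_const.mul measurable_id).pow_const _).div_const _).mul
      (Real.measurable_exp.comp measurable_neg)
  have hG_eq : ∀ y : ℝ, G y = Real.exp (-((1-s)*y)) - Real.exp (-y) := by
    intro y
    have : Real.exp (s*y) * Real.exp (-y) = Real.exp (-((1-s)*y)) := by
      rw [← Real.exp_add]; ring_nf
    simp only [hG_def, sub_mul, one_mul, this]
  have hG_bound : ∀ y ∈ Ioi (0:ℝ), 0 ≤ G y ∧ G y ≤ min 1 y := by
    intro y hy
    have hy' : (0:ℝ) < y := hy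
    have h1 := aux_one_sub_exp (a := 1) zero_le_one le_rfl hy'.le
    have h2 := aux_one_sub_exp (a := 1 - s) hss (by linarith) hy'.le
    rw [hG_eq y]
    constructor
    · rw [one_mul] at h1
      have : Real.exp (-((1-s)*y)) ≥ Real.exp (-y) := by
        apply Real.exp_le_exp.mpr; nlinarith
      linarith
    · rw [one_mul] at h1; nlinarith [h2.2, h1.1]
  -- pointwise sum of the series
  have hf_sum : ∀ y : ℝ, Summable (fun n => f n y) := by
    intro y
    apply Summable.mul_right
    exact (summable_nat_add_iff 1).mpr (Real.summable_pow_div_factorial (s*y))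
  have hf_tsum : ∀ y : ℝ, ∑' n, f n y = G y := by
    intro y
    simp only [hf_def]
    rw [tsum_mul_right, exp_tsum_shift (s*y)]
  have hf_nonneg : ∀ y : ℝ, 0 ≤ y → ∀ n, 0 ≤ f n y := by
    intro y hy n
    apply mul_nonneg (div_nonneg (pow_nonneg (by nlinarith) _) (by positivity))
      (Real.exp_pos _).le
  -- the key lintegral computation
  have hlint : ∑' n, ∫⁻ y in Ioi (0:ℝ), (‖f n y‖₊ : ℝ≥0∞) ∂ν
      = ∫⁻ y in Ioi (0:ℝ), ENNReal.ofReal (G y) ∂ν := by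
    rw [← lintegral_tsum (fun n => ((hf_meas n).nnnorm.coe_nnreal_ennreal).aemeasurable)]
    apply lintegral_congr_ae
    filter_upwards [ae_restrict_mem measurableSet_Ioi] with y hy
    have hy' : (0:ℝ) < y := hy
    have h1 : ∀ n, (‖f n y‖₊ : ℝ≥0∞) = ENNReal.ofReal (f n y) := fun n =>
      Real.enorm_eq_ofReal (hf_nonneg y hy'.le n)
    simp_rw [h1]
    rw [← ENNReal.ofReal_tsum_of_nonneg (hf_nonneg y hy'.le) (hf_sum y), hf_tsum y]
  have hfin : ∑' n, ∫⁻ y in Ioi (0:ℝ), (‖f n y‖₊ : ℝ≥0∞) ∂ν ≠ ⊤ := by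
    rw [hlint]
    refine ne_top_of_le_ne_top hν (lintegral_mono_ae ?_)
    filter_upwards [ae_restrict_mem measurableSet_Ioi] with y hy
    exact ENNReal.ofReal_le_ofReal (hG_bound y hy).2
  -- swap sum and integral
  have hswap : ∫ y in Ioi (0:ℝ), G y ∂ν = ∑' n, ∫ y in Ioi (0:ℝ), f n y ∂ν := by
    rw [← integral_tsum (fun n => (hf_meas n).aestronglyMeasurable) hfin]
    apply integral_congr_ae
    filter_upwards [] with y
    exact (hf_tsum y).symm
  -- summability of the term integrals
  have hterm_sum : Summable (fun n => ∫ y in Ioi (0:ℝ), f n y ∂ν) := by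
    have h1 : ∀ n, ∫ y in Ioi (0:ℝ), f n y ∂ν
        = (∫⁻ y in Ioi (0:ℝ), (‖f n y‖₊ : ℝ≥0∞) ∂ν).toReal := by
      intro n
      rw [integral_eq_lintegral_of_nonneg_ae ?_ (hf_meas n).aestronglyMeasurable]
      · congr 1
        apply lintegral_congr_ae
        filter_upwards [ae_restrict_mem measurableSet_Ioi] with y hy
        exact (Real.enorm_eq_ofReal (hf_nonneg y (le_of_lt hy) n)).symm
      · filter_upwards [ae_restrict_mem measurableSet_Ioi] with y hy
        exact hf_nonneg y (le_of_lt hy) n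
    rw [show (fun n => ∫ y in Ioi (0:ℝ), f n y ∂ν)
        = fun n => (∫⁻ y in Ioi (0:ℝ), (‖f n y‖₊ : ℝ≥0∞) ∂ν).toReal from funext h1]
    exact ENNReal.summable_toReal hfin
  -- value of term integrals
  have hterm_val : ∀ n : ℕ, ∫ y in Ioi (0:ℝ), f n y ∂ν
      = s^(n+1) / ((n+1).factorial : ℝ) * ∫ y in Ioi (0:ℝ), y^(n+1) * Real.exp (-y) ∂ν := by
    intro n
    rw [← integral_const_mul]
    apply integral_congr_ae
    filter_upwards [] with y
    simp only [hf_def, mul_pow]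
    ring
  -- probability side: reduce to a tsum
  have hRcast : Measurable (fun ω => ((R ω : ℕ) : ℝ)) := measurable_from_top.comp hR
  have hexp_le1 : ∀ n : ℕ, Real.exp (-t * (n : ℝ)) ≤ 1 := by
    intro n
    rw [← Real.exp_zero]
    apply Real.exp_le_exp.mpr
    have : (0:ℝ) ≤ (n:ℝ) := Nat.cast_nonneg n
    nlinarith
  have hexp_pow : ∀ n : ℕ, Real.exp (-t * (n : ℝ)) = s ^ n := by
    intro n
    rw [hs_def, ← Real.exp_nat_mul]
    congr 1
    ring
  have hmap : IsProbabilityMeasure (μ.map R) := Measure.isProbabilityMeasure_map hR.aemeasurable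
  have hint_map : Integrable (fun n : ℕ => Real.exp (-t * (n : ℝ))) (μ.map R) := by
    refine (integrable_const (1:ℝ)).mono' measurable_from_top.aestronglyMeasurable ?_
    filter_upwards [] with n
    rw [Real.norm_eq_abs, abs_of_pos (Real.exp_pos _)]
    exact hexp_le1 n
  have hchg : ∫ ω, Real.exp (-t * (R ω : ℝ)) ∂μ
      = ∫ n : ℕ, Real.exp (-t * (n : ℝ)) ∂(μ.map R) :=
    (integral_map (f := fun n : ℕ => Real.exp (-t * (n : ℝ))) hR.aemeasurable
      measurable_from_top.aestronglyMeasurable).symm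
  have hLHS : ∫ ω, Real.exp (-t * (R ω : ℝ)) ∂μ
      = ∑' n : ℕ, (μ {ω | R ω = n}).toReal * Real.exp (-t * (n : ℝ)) := by
    rw [hchg, integral_countable' hint_map]
    apply tsum_congr
    intro n
    rw [smul_eq_mul, measureReal_def, Measure.map_apply hR (measurableSet_singleton n)]
    rfl
  have hzero : μ {ω | R ω = 0} = 0 := by
    have hempty : {ω | R ω = 0} = (∅ : Set Ω) := by
      ext ω
      simp only [mem_setOf_eq, mem_empty_iff_false, iff_false]
      have := hRpos ω
      omega
    rw [hempty, measure_empty]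
  have hAsum : ∑' n : ℕ, μ {ω | R ω = n} ≠ ⊤ := by
    have hmeas : ∀ n : ℕ, MeasurableSet {ω | R ω = n} := fun n =>
      hR (measurableSet_singleton n)
    have hdisj : Pairwise (Function.onFun Disjoint fun n : ℕ => {ω | R ω = n}) := by
      intro i j hij
      simp only [Function.onFun, Set.disjoint_left, mem_setOf_eq]
      intro ω h1 h2
      exact hij (h1 ▸ h2 ▸ rfl)
    rw [← measure_iUnion hdisj hmeas]
    exact measure_ne_top μ _
  have hsummA : Summable (fun n : ℕ => (μ {ω | R ω = n}).toReal * Real.exp (-t * (n : ℝ))) := by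
    apply Summable.of_nonneg_of_le
      (fun n => mul_nonneg ENNReal.toReal_nonneg (Real.exp_pos _).le)
      (fun n => mul_le_of_le_one_right ENNReal.toReal_nonneg (hexp_le1 n))
    exact ENNReal.summable_toReal hAsum
  have hc_nonneg : ∀ m : ℕ, 1 ≤ m → 0 ≤ c m := by
    intro m hm
    rw [hc m hm]
    have hJ : 0 ≤ ∫ y in Ioi (0:ℝ), y ^ m * Real.exp (-y) ∂ν :=
      setIntegral_nonneg measurableSet_Ioi
        (fun y hy => mul_nonneg (pow_nonneg (le_of_lt hy) m) (Real.exp_pos _).le)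
    have h1 : 0 ≤ 1 / (Nat.factorial m : ℝ) * ∫ y in Ioi (0:ℝ), y ^ m * Real.exp (-y) ∂ν :=
      mul_nonneg (by positivity) hJ
    split_ifs <;> linarith
  have hB_sum : Summable (fun n : ℕ => if n = 0 then b * s else 0) :=
    summable_of_ne_finset_zero (s := {0}) (fun n hn => if_neg (by simpa using hn))
  have hsplit : ∑' n : ℕ, (μ {ω | R ω = n}).toReal * Real.exp (-t * (n : ℝ))
      = (∑' n : ℕ, ∫ y in Ioi (0:ℝ), f n y ∂ν) + b * s := by
    rw [Summable.tsum_eq_zero_add hsummA]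
    have h0 : (μ {ω | R ω = 0}).toReal * Real.exp (-t * ((0:ℕ) : ℝ)) = 0 := by
      rw [hzero]; simp
    rw [h0, zero_add]
    have hterm : ∀ n : ℕ, (μ {ω | R ω = n+1}).toReal * Real.exp (-t * ((n+1 : ℕ) : ℝ))
        = (∫ y in Ioi (0:ℝ), f n y ∂ν) + (if n = 0 then b * s else 0) := by
      intro n
      rw [hRlaw (n+1) (by omega), ENNReal.toReal_ofReal (hc_nonneg (n+1) (by omega)),
        hc (n+1) (by omega), hexp_pow (n+1), hterm_val n]
      rcases Nat.eq_zero_or_pos n with h | h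
      · subst h
        rw [if_pos rfl, if_pos rfl]
        ring
      · rw [if_neg (by omega), if_neg (by omega)]; ring
    rw [tsum_congr hterm, Summable.tsum_add hterm_sum hB_sum, tsum_ite_eq 0 (fun _ => b * s)]
  -- integrability for the RHS
  have hIa : ∀ x : ℝ, 0 ≤ x → x ≤ 1 →
      Integrable (fun y => 1 - Real.exp (-x * y)) (ν.restrict (Ioi 0)) := by
    intro x hx0 hx1
    apply aux_integrable_of_le hK
      ((Real.measurable_exp.comp (measurable_id.const_mul (-x))).const_sub 1) 1
    intro y hy
    have h := aux_one_sub_exp hx0 hx1 (le_of_lt hy)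
    show |1 - Real.exp (-x * y)| ≤ 1 * min 1 y
    rw [one_mul, show -x * y = -(x * y) from neg_mul x y, abs_of_nonneg h.2]
    exact h.1
  have hRHS : 1 - φ (1 - s) = b * s + ∫ y in Ioi (0:ℝ), G y ∂ν := by
    have e1 := hφ 1 zero_le_one
    rw [hφ1] at e1
    have e2 := hφ (1 - s) hss
    rw [mul_sub, mul_one] at e2
    have e3 : (∫ y in Ioi (0:ℝ), (1 - Real.exp (-(1:ℝ) * y)) ∂ν)
        - (∫ y in Ioi (0:ℝ), (1 - Real.exp (-(1-s) * y)) ∂ν)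
        = ∫ y in Ioi (0:ℝ), G y ∂ν := by
      rw [← integral_sub (hIa 1 zero_le_one le_rfl) (hIa (1-s) hss (by linarith))]
      apply integral_congr_ae
      filter_upwards [] with y
      rw [hG_eq y]
      simp only [neg_mul, one_mul]
      ring
    rw [mul_one] at e1
    linarith
  rw [hLHS, hsplit, ← hswap]
  linarith
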